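/- arXiv:2002.08101 — 5 statements merged into one kernel-verified Lean document; each statement's English description precedes it below -/
import Mathlib

section
/- Let (V, Q) be an FBAS. For every minimal splitting set S of (V, Q) there exist minimal quorums Û₁ and Û₂ of (V, Q) (not necessarily distinct) such that S = Û₁ ∩ Û₂. In particular, if (V, Q) does not enjoy quorum intersection, then the empty set is the unique minimal splitting set and there exist two disjoint minimal quorums. -/
open Finset

variable {α : Type*} [DecidableEq α]

/-- `U` is a quorum of the FBAS `(V, Q)`: a nonempty subset of `V` containing,
for every member `v`, some slice `q ∈ Q v` with `q ⊆ U`. -/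
def IsQuorum (V : Finset α) (Q : α → Finset (Finset α)) (U : Finset α) : Prop :=
  U ⊆ V ∧ U.Nonempty ∧ ∀ v ∈ U, ∃ q ∈ Q v, q ⊆ U

/-- A minimal quorum: a quorum none of whose proper subsets is a quorum. -/
def IsMinimalQuorum (V : Finset α) (Q : α → Finset (Finset α)) (U : Finset α) : Prop :=
  IsQuorum V Q U ∧ ∀ U' ⊂ U, ¬IsQuorum V Q U'

/-- A blocking set: a subset of `V` intersecting every quorum of `(V, Q)`. -/
def IsBlocking (V : Finset α) (Q : α → Finset (Finset α)) (B : Finset α) : Prop :=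
  B ⊆ V ∧ ∀ U, IsQuorum V Q U → (B ∩ U).Nonempty

/-- A minimal blocking set: a blocking set none of whose proper subsets is blocking. -/
def IsMinimalBlocking (V : Finset α) (Q : α → Finset (Finset α)) (B : Finset α) : Prop :=
  IsBlocking V Q B ∧ ∀ B' ⊂ B, ¬IsBlocking V Q B'

/-- A splitting set: a subset of `V` containing the intersection of two distinct quorums. -/
def IsSplitting (V : Finset α) (Q : α → Finset (Finset α)) (S : Finset α) : Prop :=
  S ⊆ V ∧ ∃ U₁ U₂, IsQuorum V Q U₁ ∧ IsQuorum V Q U₂ ∧ U₁ ≠ U₂ ∧ U₁ ∩ U₂ ⊆ S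

/-- A minimal splitting set: a splitting set none of whose proper subsets is splitting. -/
def IsMinimalSplitting (V : Finset α) (Q : α → Finset (Finset α)) (S : Finset α) : Prop :=
  IsSplitting V Q S ∧ ∀ S' ⊂ S, ¬IsSplitting V Q S'

/-- Well-formedness of an FBAS `(V, Q)`: every slice of every node `v ∈ V`
contains `v` and is a subset of `V`. -/
def WellFormed (V : Finset α) (Q : α → Finset (Finset α)) : Prop :=
  ∀ v ∈ V, ∀ q ∈ Q v, v ∈ q ∧ q ⊆ V

/-- `T` is the top tier of `(V, Q)`: the union of all minimal quorums. -/
def IsTopTier (V : Finset α) (Q : α → Finset (Finset α)) (T : Finset α) : Prop :=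
  ∀ v, v ∈ T ↔ ∃ U, IsMinimalQuorum V Q U ∧ v ∈ U

/-- `(V, Q)` enjoys quorum intersection: any two quorums share a node. -/
def QuorumIntersection (V : Finset α) (Q : α → Finset (Finset α)) : Prop :=
  ∀ U₁ U₂, IsQuorum V Q U₁ → IsQuorum V Q U₂ → (U₁ ∩ U₂).Nonempty

lemma exists_minimal_quorum_subset (V : Finset α) (Q : α → Finset (Finset α))
    {U : Finset α} (hU : IsQuorum V Q U) :
    ∃ U' ⊆ U, IsMinimalQuorum V Q U' := by
  induction U using Finset.strongInduction with
  | _ U ih =>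
    by_cases h : ∀ U' ⊂ U, ¬IsQuorum V Q U'
    · exact ⟨U, subset_rfl, hU, h⟩
    · push_neg at h
      obtain ⟨U', hsub, hq⟩ := h
      obtain ⟨W, hW, hWmin⟩ := ih U' hsub hq
      exact ⟨W, hW.trans hsub.subset, hWmin⟩

/-- every minimal splitting set is the intersection of two (not
necessarily distinct) minimal quorums; and if quorum intersection fails, the
empty set is the unique minimal splitting set and two disjoint minimal quorums exist. -/
theorem minimal_splitting_sets_from_minimal_quorums
    (V : Finset α) (Q : α → Finset (Finset α)) (hwf : WellFormed V Q) :
    (∀ S, IsMinimalSplitting V Q S →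
      ∃ U₁ U₂, IsMinimalQuorum V Q U₁ ∧ IsMinimalQuorum V Q U₂ ∧ S = U₁ ∩ U₂) ∧
    (¬QuorumIntersection V Q →
      (∀ S, IsMinimalSplitting V Q S ↔ S = ∅) ∧
      ∃ U₁ U₂, IsMinimalQuorum V Q U₁ ∧ IsMinimalQuorum V Q U₂ ∧ Disjoint U₁ U₂) := by
  have key : ∀ S, IsMinimalSplitting V Q S →
      ∃ U₁ U₂, IsMinimalQuorum V Q U₁ ∧ IsMinimalQuorum V Q U₂ ∧ S = U₁ ∩ U₂ := by
    rintro S ⟨⟨hSV, U₁, U₂, h1, h2, hne, hsub⟩, hmin⟩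
    obtain ⟨W₁, hW₁U, hW₁⟩ := exists_minimal_quorum_subset V Q h1
    obtain ⟨W₂, hW₂U, hW₂⟩ := exists_minimal_quorum_subset V Q h2
    by_cases hWeq : W₁ = W₂
    · subst hWeq
      have hWS : W₁ ⊆ S := fun x hx => hsub (mem_inter.2 ⟨hW₁U hx, hW₂U hx⟩)
      have hspl : IsSplitting V Q W₁ := by
        rcases ne_or_eq U₁ W₁ with h | h
        · exact ⟨hW₁.1.1, U₁, W₁, h1, hW₁.1, h, fun x hx => (mem_inter.1 hx).2⟩
        · refine ⟨hW₁.1.1, U₂, W₁, h2, hW₁.1, ?_, fun x hx => (mem_inter.1 hx).2⟩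
          intro h'; exact hne (h.trans h'.symm)
      have heq : W₁ = S := by
        by_contra hne'
        exact hmin W₁ (ssubset_of_subset_of_ne hWS hne') hspl
      exact ⟨W₁, W₁, hW₁, hW₁, by rw [← heq, inter_self]⟩
    · have hspl : IsSplitting V Q (W₁ ∩ W₂) :=
        ⟨inter_subset_left.trans hW₁.1.1, W₁, W₂, hW₁.1, hW₂.1, hWeq, subset_rfl⟩
      have hIS : W₁ ∩ W₂ ⊆ S := fun x hx =>
        hsub (mem_inter.2 ⟨hW₁U (mem_inter.1 hx).1, hW₂U (mem_inter.1 hx).2⟩)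
      have heq : W₁ ∩ W₂ = S := by
        by_contra hne'
        exact hmin _ (ssubset_of_subset_of_ne hIS hne') hspl
      exact ⟨W₁, W₂, hW₁, hW₂, heq.symm⟩
  refine ⟨key, ?_⟩
  intro hQI
  simp only [QuorumIntersection] at hQI
  push_neg at hQI
  obtain ⟨U₁, U₂, h1, h2, hint⟩ := hQI
  have hne : U₁ ≠ U₂ := by
    intro h; subst h
    rw [inter_self] at hint
    exact h1.2.1.ne_empty hint
  have hsplit : IsSplitting V Q ∅ := ⟨empty_subset _, U₁, U₂, h1, h2, hne, by rw [hint]⟩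
  have hminsplit : IsMinimalSplitting V Q ∅ :=
    ⟨hsplit, fun S' hS' => absurd hS' (by simp)⟩
  constructor
  · intro S
    constructor
    · intro hS
      by_contra hSne
      exact hS.2 ∅ (Finset.empty_ssubset.2 (Finset.nonempty_iff_ne_empty.2 hSne)) hsplit
    · rintro rfl; exact hminsplit
  · obtain ⟨W₁, hW₁U, hW₁⟩ := exists_minimal_quorum_subset V Q h1
    obtain ⟨W₂, hW₂U, hW₂⟩ := exists_minimal_quorum_subset V Q h2
    refine ⟨W₁, W₂, hW₁, hW₂, Finset.disjoint_left.2 fun x hx₁ hx₂ => ?_⟩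
    have hm : x ∈ U₁ ∩ U₂ := mem_inter.2 ⟨hW₁U hx₁, hW₂U hx₂⟩
    rw [hint] at hm
    exact absurd hm (notMem_empty x)
end

section
/- Let (V, Q) be an FBAS with top tier T. Then for every top tier node v ∈ T there exists at least one minimal blocking set B of (V, Q) with v ∈ B. -/
open Finset

variable {α : Type*} [DecidableEq α]

lemma exists_minimal_blocking_subset (V : Finset α) (Q : α → Finset (Finset α)) :
    ∀ B₀ : Finset α, IsBlocking V Q B₀ → ∃ B, B ⊆ B₀ ∧ IsMinimalBlocking V Q B := by
  intro B₀
  induction B₀ using Finset.strongInductionOn with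
  | _ B₀ ih =>
    intro hB
    by_cases h : ∀ B' ⊂ B₀, ¬IsBlocking V Q B'
    · exact ⟨B₀, subset_rfl, hB, h⟩
    · push_neg at h
      obtain ⟨B', hsub, hB'⟩ := h
      obtain ⟨B, hBB, hmin⟩ := ih B' hsub hB'
      exact ⟨B, hBB.trans hsub.subset, hmin⟩

/-- every top tier node is a member of at least one minimal blocking set. -/
theorem top_tier_node_in_some_minimal_blocking_set
    (V : Finset α) (Q : α → Finset (Finset α)) (hwf : WellFormed V Q)
    (T : Finset α) (hT : IsTopTier V Q T) :
    ∀ v ∈ T, ∃ B, IsMinimalBlocking V Q B ∧ v ∈ B := by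
  intro v hv
  obtain ⟨U, hUmin, hvU⟩ := (hT v).mp hv
  have hvV : v ∈ V := hUmin.1.1 hvU
  set B₀ : Finset α := (V \ U) ∪ {v} with hB₀def
  have hB₀ : IsBlocking V Q B₀ := by
    constructor
    · intro x hx
      rcases Finset.mem_union.mp hx with h | h
      · exact (Finset.mem_sdiff.mp h).1
      · rwa [Finset.mem_singleton.mp h]
    · intro W hW
      by_cases hWU : W ⊆ U
      · have hWeq : W = U := by
          by_contra hne
          exact hUmin.2 W (ssubset_of_subset_of_ne hWU hne) hW
        subst hWeq
        exact ⟨v, Finset.mem_inter.mpr ⟨Finset.mem_union_right _ (Finset.mem_singleton_self v), hvU⟩⟩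
      · obtain ⟨w, hwW, hwU⟩ := Finset.not_subset.mp hWU
        exact ⟨w, Finset.mem_inter.mpr
          ⟨Finset.mem_union_left _ (Finset.mem_sdiff.mpr ⟨hW.1 hwW, hwU⟩), hwW⟩⟩
  obtain ⟨B, hBsub, hBmin⟩ := exists_minimal_blocking_subset V Q B₀ hB₀
  refine ⟨B, hBmin, ?_⟩
  obtain ⟨x, hx⟩ := hBmin.1.2 U hUmin.1
  have hxB := (Finset.mem_inter.mp hx).1
  have hxU := (Finset.mem_inter.mp hx).2
  rcases Finset.mem_union.mp (hBsub hxB) with h | h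
  · exact absurd hxU (Finset.mem_sdiff.mp h).2
  · rwa [Finset.mem_singleton.mp h] at hxB
end

section
/- Let (V, Q) be an FBAS whose top tier T is symmetric with non-nested quorum set (T, ∅, t), where m = |T| and 1 ≤ t ≤ m; that is, T is the union of all minimal quorums of (V, Q) and for every v ∈ T, Q(v) = {q ⊆ V : v ∈ q and |q ∩ T| ≥ t}. Then every minimal splitting set of (V, Q) has cardinality exactly max(2t − m, 0). -/
open Finset

variable {α : Type*} [DecidableEq α]

/-- in an FBAS with a symmetric top tier `T` with non-nested quorum
set `(T, ∅, t)` (with `1 ≤ t ≤ |T|`), every minimal splitting set has cardinality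
exactly `max (2t - |T|) 0` (expressed via truncated natural subtraction). -/
theorem symmetric_top_tier_minimal_splitting_card
    (V : Finset α) (Q : α → Finset (Finset α)) (hwf : WellFormed V Q)
    (T : Finset α) (hT : IsTopTier V Q T)
    (t : ℕ) (ht1 : 1 ≤ t) (ht2 : t ≤ T.card)
    (hsym : ∀ v ∈ T, ∀ q : Finset α, q ∈ Q v ↔ (q ⊆ V ∧ v ∈ q ∧ t ≤ (q ∩ T).card)) :
    ∀ S, IsMinimalSplitting V Q S → S.card = 2 * t - T.card := by

  intro S hS
  obtain ⟨⟨hSV, U₁, U₂, hU₁, hU₂, hne, hint⟩, hmin⟩ := hS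
  have hTV : T ⊆ V := by
    intro v hv
    obtain ⟨U, ⟨⟨hUV, _, _⟩, _⟩, hvU⟩ := (hT v).1 hv
    exact hUV hvU
  have hquo : ∀ A ⊆ T, t ≤ A.card → IsQuorum V Q A := by
    intro A hAT hcard
    refine ⟨hAT.trans hTV, Finset.card_pos.mp (lt_of_lt_of_le ht1 hcard), ?_⟩
    intro v hv
    refine ⟨A, (hsym v (hAT hv) A).mpr ⟨hAT.trans hTV, hv, ?_⟩, subset_rfl⟩
    rwa [Finset.inter_eq_left.mpr hAT]
  have hminq : ∀ U, IsQuorum V Q U → ∃ M, IsMinimalQuorum V Q M ∧ M ⊆ U := by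
    intro U
    induction U using Finset.strongInduction with
    | _ U ih =>
      intro hU
      by_cases h : ∀ U' ⊂ U, ¬ IsQuorum V Q U'
      · exact ⟨U, ⟨hU, h⟩, subset_rfl⟩
      · push_neg at h
        obtain ⟨U', hsub, hU'⟩ := h
        obtain ⟨M, hM, hMU⟩ := ih U' hsub hU'
        exact ⟨M, hM, hMU.trans hsub.subset⟩
  have hMsub : ∀ M, IsMinimalQuorum V Q M → M ⊆ T := by
    intro M hM v hv
    exact (hT v).2 ⟨M, hM, hv⟩
  have hMcard : ∀ M, IsMinimalQuorum V Q M → t ≤ M.card := by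
    intro M hM
    obtain ⟨v, hv⟩ := hM.1.2.1
    have hvT : M ⊆ T := hMsub M hM
    obtain ⟨q, hq, hqM⟩ := hM.1.2.2 v hv
    have h1 := ((hsym v (hvT hv) q).1 hq).2.2
    calc t ≤ (q ∩ T).card := h1
      _ ≤ M.card := Finset.card_le_card ((Finset.inter_subset_left).trans hqM)
  have hcardT : ∀ U, IsQuorum V Q U → t ≤ (U ∩ T).card := by
    intro U hU
    obtain ⟨M, hM, hMU⟩ := hminq U hU
    obtain ⟨v, hv⟩ := hM.1.2.1
    have hvT : v ∈ T := (hT v).2 ⟨M, hM, hv⟩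
    obtain ⟨q, hq, hqU⟩ := hU.2.2 v (hMU hv)
    have h1 := ((hsym v hvT q).1 hq).2.2
    calc t ≤ (q ∩ T).card := h1
      _ ≤ (U ∩ T).card := Finset.card_le_card (Finset.inter_subset_inter hqU subset_rfl)
  by_cases hcase : 2 * t ≤ T.card
  · obtain ⟨A, hAT, hA⟩ := Finset.exists_subset_card_eq ht2
    have hBex : t ≤ (T \ A).card := by
      rw [Finset.card_sdiff_of_subset hAT]; omega
    obtain ⟨B, hBT, hB⟩ := Finset.exists_subset_card_eq hBex
    have hABdisj : A ∩ B = ∅ := by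
      apply Finset.eq_empty_of_forall_notMem
      intro x hx
      rw [Finset.mem_inter] at hx
      exact (Finset.mem_sdiff.1 (hBT hx.2)).2 hx.1
    have hANeB : A ≠ B := by
      intro h
      obtain ⟨x, hx⟩ := Finset.card_pos.mp (show 0 < A.card by omega)
      have : x ∈ A ∩ B := Finset.mem_inter.2 ⟨hx, h ▸ hx⟩
      simp [hABdisj] at this
    have hempty : IsSplitting V Q ∅ :=
      ⟨Finset.empty_subset V, A, B, hquo A hAT hA.ge,
        hquo B (hBT.trans (Finset.sdiff_subset)) hB.ge, hANeB, by rw [hABdisj]⟩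
    have hS0 : S = ∅ := by
      by_contra h
      exact hmin ∅ (Finset.empty_ssubset.mpr (Finset.nonempty_iff_ne_empty.mpr h)) hempty
    rw [hS0]
    simp; omega
  · push_neg at hcase
    have hJcard : 2 * t - T.card ≤ (U₁ ∩ U₂ ∩ T).card := by
      have h1 := hcardT U₁ hU₁
      have h2 := hcardT U₂ hU₂
      have h3 := Finset.card_inter_add_card_union (U₁ ∩ T) (U₂ ∩ T)
      have h4 : (U₁ ∩ T) ∩ (U₂ ∩ T) = U₁ ∩ U₂ ∩ T := by
        ext x; simp [Finset.mem_inter]; try tauto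
      have h5 : ((U₁ ∩ T) ∪ (U₂ ∩ T)).card ≤ T.card := by
        apply Finset.card_le_card
        intro x hx
        rcases Finset.mem_union.1 hx with h | h
        · exact (Finset.mem_inter.1 h).2
        · exact (Finset.mem_inter.1 h).2
      rw [h4] at h3
      omega
    obtain ⟨J', hJ'sub, hJ'card⟩ := Finset.exists_subset_card_eq hJcard
    have hJ'T : J' ⊆ T := hJ'sub.trans (Finset.inter_subset_right)
    have hJ'S : J' ⊆ S := hJ'sub.trans ((Finset.inter_subset_left).trans hint)
    have hsplit : IsSplitting V Q J' := by
      by_cases htm : t = T.card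
      · have hJ'eq : J' = T := Finset.eq_of_subset_of_card_le hJ'T (by omega)
        have hTsub : ∀ U, IsQuorum V Q U → T ⊆ U := by
          intro U hU
          obtain ⟨M, hM, hMU⟩ := hminq U hU
          have hMT : M ⊆ T := hMsub M hM
          have hMc : t ≤ M.card := hMcard M hM
          have : M = T := Finset.eq_of_subset_of_card_le hMT (by omega)
          rw [← this]; exact hMU
        have hTq : IsQuorum V Q T := hquo T subset_rfl ht2
        rcases ne_or_eq U₁ T with h1 | h1
        · refine ⟨hJ'T.trans hTV, T, U₁, hTq, hU₁, Ne.symm h1, ?_⟩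
          rw [Finset.inter_eq_left.mpr (hTsub U₁ hU₁), hJ'eq]
        · have h2 : U₂ ≠ T := fun h => hne (h1.trans h.symm)
          refine ⟨hJ'T.trans hTV, T, U₂, hTq, hU₂, Ne.symm h2, ?_⟩
          rw [Finset.inter_eq_left.mpr (hTsub U₂ hU₂), hJ'eq]
      · have htm' : t < T.card := lt_of_le_of_ne ht2 htm
        have hTJ' : (T \ J').card = T.card - (2 * t - T.card) := by
          rw [Finset.card_sdiff_of_subset hJ'T, hJ'card]
        obtain ⟨P₁, hP₁sub, hP₁⟩ := Finset.exists_subset_card_eq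
          (show T.card - t ≤ (T \ J').card by omega)
        have hrest : T.card - t ≤ ((T \ J') \ P₁).card := by
          rw [Finset.card_sdiff_of_subset hP₁sub]; omega
        obtain ⟨P₂, hP₂sub, hP₂⟩ := Finset.exists_subset_card_eq hrest
        have hP₁T : P₁ ⊆ T \ J' := hP₁sub
        have hP₂T : P₂ ⊆ T \ J' := hP₂sub.trans (Finset.sdiff_subset)
        have hd1 : Disjoint J' P₁ := by
          rw [Finset.disjoint_right]
          intro x hx
          exact (Finset.mem_sdiff.1 (hP₁T hx)).2
        have hd2 : Disjoint J' P₂ := by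
          rw [Finset.disjoint_right]
          intro x hx
          exact (Finset.mem_sdiff.1 (hP₂T hx)).2
        have hd12 : Disjoint P₁ P₂ := by
          rw [Finset.disjoint_right]
          intro x hx
          exact (Finset.mem_sdiff.1 (hP₂sub hx)).2
        set W₁ := J' ∪ P₁ with hW₁
        set W₂ := J' ∪ P₂ with hW₂
        have hW₁T : W₁ ⊆ T := Finset.union_subset hJ'T (hP₁T.trans (Finset.sdiff_subset))
        have hW₂T : W₂ ⊆ T := Finset.union_subset hJ'T (hP₂T.trans (Finset.sdiff_subset))
        have hW₁c : W₁.card = t := by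
          rw [hW₁, Finset.card_union_of_disjoint hd1, hJ'card, hP₁]; omega
        have hW₂c : W₂.card = t := by
          rw [hW₂, Finset.card_union_of_disjoint hd2, hJ'card, hP₂]; omega
        obtain ⟨x, hx⟩ : P₁.Nonempty := Finset.card_pos.mp (by omega)
        have hxW₂ : x ∉ W₂ := by
          rw [hW₂, Finset.mem_union]
          push_neg
          exact ⟨(Finset.mem_sdiff.1 (hP₁T hx)).2, Finset.disjoint_left.1 hd12 hx⟩
        have hWne : W₁ ≠ W₂ := by
          intro h
          exact hxW₂ (h ▸ Finset.mem_union_right _ hx)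
        refine ⟨hJ'T.trans hTV, W₁, W₂, hquo W₁ hW₁T hW₁c.ge, hquo W₂ hW₂T hW₂c.ge, hWne, ?_⟩
        intro y hy
        rw [Finset.mem_inter, hW₁, hW₂, Finset.mem_union, Finset.mem_union] at hy
        rcases hy.1 with h | h
        · exact h
        · rcases hy.2 with h' | h'
          · exact h'
          · exact absurd h' (Finset.disjoint_left.1 hd12 h)
    have hSJ : S = J' := by
      by_contra h
      exact hmin J' (lt_of_le_of_ne hJ'S (fun he => h he.symm)) hsplit
    rw [hSJ, hJ'card]
end

section
/- Let (V, Q) be an FBAS whose top tier T is symmetric with non-nested quorum set (T, ∅, t), where 1 ≤ t ≤ |T|; that is, T is the union of all minimal quorums of (V, Q) and for every v ∈ T, Q(v) = {q ⊆ V : v ∈ q and |q ∩ T| ≥ t}. Then the minimal quorums of (V, Q) are exactly the subsets of T of cardinality t. -/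
open Finset

variable {α : Type*} [DecidableEq α]

/-- in an FBAS with a symmetric top tier `T` with non-nested quorum
set `(T, ∅, t)` (with `1 ≤ t ≤ |T|`), the minimal quorums are exactly the subsets
of `T` of cardinality `t`. -/
theorem symmetric_top_tier_minimal_quorums
    (V : Finset α) (Q : α → Finset (Finset α)) (hwf : WellFormed V Q)
    (T : Finset α) (hT : IsTopTier V Q T)
    (t : ℕ) (ht1 : 1 ≤ t) (ht2 : t ≤ T.card)
    (hsym : ∀ v ∈ T, ∀ q : Finset α, q ∈ Q v ↔ (q ⊆ V ∧ v ∈ q ∧ t ≤ (q ∩ T).card)) :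
    ∀ U, IsMinimalQuorum V Q U ↔ (U ⊆ T ∧ U.card = t) := by
  have hTV : T ⊆ V := by
    intro v hv
    obtain ⟨U, ⟨⟨hUV, _, _⟩, _⟩, hvU⟩ := (hT v).1 hv
    exact hUV hvU
  have hquo : ∀ U : Finset α, U ⊆ T → U.card = t → IsQuorum V Q U := by
    intro U hUT hcard
    refine ⟨hUT.trans hTV, ?_, ?_⟩
    · rw [← Finset.card_pos, hcard]; omega
    · intro v hv
      refine ⟨U, ?_, Finset.Subset.refl U⟩
      rw [hsym v (hUT hv)]
      exact ⟨hUT.trans hTV, hv, by rw [Finset.inter_eq_left.mpr hUT, hcard]⟩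
  intro U
  constructor
  · rintro ⟨⟨hUV, hne, hsl⟩, hmin⟩
    have hUT : U ⊆ T := fun v hv => (hT v).2 ⟨U, ⟨⟨hUV, hne, hsl⟩, hmin⟩, hv⟩
    have htU : t ≤ U.card := by
      obtain ⟨v, hv⟩ := hne
      obtain ⟨q, hq, hqU⟩ := hsl v hv
      have h1 := ((hsym v (hUT hv) q).1 hq).2.2
      calc t ≤ (q ∩ T).card := h1
        _ ≤ q.card := Finset.card_le_card Finset.inter_subset_left
        _ ≤ U.card := Finset.card_le_card hqU
    refine ⟨hUT, ?_⟩
    by_contra h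
    obtain ⟨U', hU'U, hU'card⟩ := Finset.exists_subset_card_eq htU
    have hss : U' ⊂ U := hU'U.ssubset_of_ne (by
      intro he; apply h; rw [← he, hU'card])
    exact hmin U' hss (hquo U' (hU'U.trans hUT) hU'card)
  · rintro ⟨hUT, hcard⟩
    refine ⟨hquo U hUT hcard, ?_⟩
    rintro U' hU' ⟨hU'V, ⟨v, hv⟩, hsl⟩
    obtain ⟨q, hq, hqU'⟩ := hsl v hv
    have hU'T : U' ⊆ T := hU'.subset.trans hUT
    have h1 := ((hsym v (hU'T hv) q).1 hq).2.2
    have h2 : q.card ≤ U'.card := Finset.card_le_card hqU'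
    have h3 : (q ∩ T).card ≤ q.card := Finset.card_le_card Finset.inter_subset_left
    have h4 : U'.card < U.card := Finset.card_lt_card hU'
    omega
end

section
/- Let (V, Q) be an FBAS that has at least one quorum, and let T be its top tier. Then T is itself a quorum of (V, Q), and T intersects every quorum of (V, Q). -/
open Finset

variable {α : Type*} [DecidableEq α]

/-- in an FBAS with at least one quorum, the top tier is itself a
quorum and intersects every quorum. -/
theorem top_tier_is_quorum_and_intersects_all
    (V : Finset α) (Q : α → Finset (Finset α)) (hwf : WellFormed V Q)
    (havail : ∃ U, IsQuorum V Q U)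
    (T : Finset α) (hT : IsTopTier V Q T) :
    IsQuorum V Q T ∧ ∀ U, IsQuorum V Q U → (T ∩ U).Nonempty := by
  -- every quorum contains a minimal quorum
  have key : ∀ U, IsQuorum V Q U → ∃ M, IsMinimalQuorum V Q M ∧ M ⊆ U := by
    intro U hU
    induction U using Finset.strongInduction with
    | _ U ih =>
      by_cases hmin : ∀ U' ⊂ U, ¬IsQuorum V Q U'
      · exact ⟨U, ⟨hU, hmin⟩, subset_rfl⟩
      · push_neg at hmin
        obtain ⟨U', hsub, hU'⟩ := hmin
        obtain ⟨M, hM, hMU⟩ := ih U' hsub hU'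
        exact ⟨M, hM, hMU.trans hsub.subset⟩
  have hint : ∀ U, IsQuorum V Q U → (T ∩ U).Nonempty := by
    intro U hU
    obtain ⟨M, hM, hMU⟩ := key U hU
    obtain ⟨v, hv⟩ := hM.1.2.1
    exact ⟨v, Finset.mem_inter.2 ⟨(hT v).2 ⟨M, hM, hv⟩, hMU hv⟩⟩
  refine ⟨⟨?_, ?_, ?_⟩, hint⟩
  · intro v hv
    obtain ⟨M, hM, hvM⟩ := (hT v).1 hv
    exact hM.1.1 hvM
  · obtain ⟨U, hU⟩ := havail
    obtain ⟨v, hv⟩ := (hint U hU)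
    exact ⟨v, (Finset.mem_inter.1 hv).1⟩
  · intro v hv
    obtain ⟨M, hM, hvM⟩ := (hT v).1 hv
    obtain ⟨q, hq, hqM⟩ := hM.1.2.2 v hvM
    refine ⟨q, hq, hqM.trans ?_⟩
    intro x hx
    exact (hT x).2 ⟨M, hM, hx⟩
end
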